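/- Let S be a finite set of integers with S ⊆ [0, min{L−1, T−3, ⌊(C̄−V̄)/V⌋}], let η be a real number with 0 ≤ η ≤ min{L−1, (C̄−V̄)/V}, and let t be an integer with 1 ≤ t ≤ T−1 such that t ≥ s+2 for all s ∈ S. If η ∈ {0, (C̄−V̄)/V}, or if η = L−1 and L−1 ∈ S, then there exist 2T affinely independent points of P (viewed as vectors in ℝ^{2T}) each satisfying x_t ≤ (C̄ − η·V)·y_t + η·V·y_{t+1} − Σ_{s∈S} (C̄ − V̄ − s·V)·(y_{t−s} − y_{t−s−1}) with equality; hence this inequality is facet-defining for conv(P). -/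

import Mathlib

/-- Membership in the single-generator unit-commitment set `P`:
`x` is the generation vector, `y` the binary on/off vector, over periods `1,…,T`. -/
def inP (T L Ldn : ℤ) (Cl Cu V Vb : ℝ) (x y : ℤ → ℝ) : Prop :=
  (∀ t : ℤ, 1 ≤ t → t ≤ T → 0 ≤ x t) ∧
  (∀ t : ℤ, 1 ≤ t → t ≤ T → y t = 0 ∨ y t = 1) ∧
  (∀ t k : ℤ, 2 ≤ t → t ≤ T → t ≤ k → k ≤ min T (t + L - 1) →
    -y (t - 1) + y t - y k ≤ 0) ∧
  (∀ t k : ℤ, 2 ≤ t → t ≤ T → t ≤ k → k ≤ min T (t + Ldn - 1) →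
    y (t - 1) - y t + y k ≤ 1) ∧
  (∀ t : ℤ, 1 ≤ t → t ≤ T → Cl * y t ≤ x t) ∧
  (∀ t : ℤ, 1 ≤ t → t ≤ T → x t ≤ Cu * y t) ∧
  (∀ t : ℤ, 2 ≤ t → t ≤ T → x t - x (t - 1) ≤ V * y (t - 1) + Vb * (1 - y (t - 1))) ∧
  (∀ t : ℤ, 2 ≤ t → t ≤ T → x (t - 1) - x t ≤ V * y t + Vb * (1 - y t))

/-- View a pair `(x, y)` as a vector in `ℝ^T × ℝ^T ≃ ℝ^{2T}` by restricting to
the periods `1,…,T` (index `j : Fin T.toNat` corresponds to period `j + 1`). -/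
def embed (T : ℤ) (p : (ℤ → ℝ) × (ℤ → ℝ)) :
    (Fin T.toNat → ℝ) × (Fin T.toNat → ℝ) :=
  (fun j => p.1 (((j : ℕ) : ℤ) + 1), fun j => p.2 (((j : ℕ) : ℤ) + 1))

noncomputable def blkP (b e : ℤ) (xf : ℤ → ℝ) : (ℤ → ℝ) × (ℤ → ℝ) :=
  (fun i => if b ≤ i ∧ i ≤ e then xf i else 0,
   fun i => if b ≤ i ∧ i ≤ e then 1 else 0)

noncomputable def catP (T t : ℤ) (S : Finset ℤ) (Cl Cu V Vb δ : ℝ)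
    (wb we : ℤ) (wv : ℝ) (m : ℤ) : (ℤ → ℝ) × (ℤ → ℝ) :=
  if m = 0 then blkP 1 0 (fun _ => Cl)
  else if m ≤ T then blkP 1 T (fun i => if i = m ∧ ¬ m = t then Cu - δ else Cu)
  else if m - T = t then blkP wb we (fun _ => wv)
  else if m - T < t then
    (if t - (m - T) - 1 ∈ S then
        blkP (m - T + 1) T (fun i => Vb + ((min i t - (m - T + 1) : ℤ) : ℝ) * V)
      else blkP 1 (m - T) (fun _ => Cl))
  else blkP (m - T + 1) T (fun _ => Cl)

def catB (T t : ℤ) (S : Finset ℤ) (wb : ℤ) (m : ℤ) : ℤ :=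
  if m = 0 then 1 else if m ≤ T then 1 else if m - T = t then wb
  else if m - T < t then (if t - (m - T) - 1 ∈ S then m - T + 1 else 1)
  else m - T + 1

def catE (T t : ℤ) (S : Finset ℤ) (we : ℤ) (m : ℤ) : ℤ :=
  if m = 0 then 0 else if m ≤ T then T else if m - T = t then we
  else if m - T < t then (if t - (m - T) - 1 ∈ S then T else m - T)
  else T

lemma catP_snd (T t : ℤ) (S : Finset ℤ) (Cl Cu V Vb δ : ℝ)
    (wb we : ℤ) (wv : ℝ) (m : ℤ) :
    (catP T t S Cl Cu V Vb δ wb we wv m).2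
      = fun i => if catB T t S wb m ≤ i ∧ i ≤ catE T t S we m then (1:ℝ) else 0 := by
  unfold catP catB catE
  split_ifs <;> rfl

lemma ind_diff (b e j : ℤ) :
    (if b ≤ j ∧ j ≤ e then (1:ℝ) else 0) - (if b ≤ j+1 ∧ j+1 ≤ e then 1 else 0)
      = if j = e ∧ b ≤ e then 1 else if j + 1 = b ∧ b ≤ e then -1 else 0 := by
  split_ifs <;> first | (exfalso; omega) | norm_num

lemma diff_zero (b e j : ℤ) (h1 : j ≠ e) (h2 : j + 1 ≠ b) :
    (if b ≤ j ∧ j ≤ e then (1:ℝ) else 0) - (if b ≤ j+1 ∧ j+1 ≤ e then 1 else 0) = 0 := by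
  split_ifs <;> first | (exfalso; omega) | norm_num

lemma sum_single_zero {n : ℕ} (f : Fin n → ℝ) (i₀ : Fin n)
    (h : ∑ i, f i = 0) (h0 : ∀ i, i ≠ i₀ → f i = 0) : f i₀ = 0 := by
  rw [← h]
  exact (Finset.sum_eq_single_of_mem i₀ (Finset.mem_univ _)
    (fun b _ hb => h0 b hb)).symm

lemma inP_blkP (T L Ldn : ℤ) (Cl Cu V Vb : ℝ)
    (hCl : 0 < Cl) (hV : 0 < V) (hVb1 : Cl < Vb)
    (b e : ℤ) (xf : ℤ → ℝ)
    (hup : b = 1 ∨ e = T ∨ b + L - 1 ≤ e)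
    (hcap : ∀ i, b ≤ i → i ≤ e → Cl ≤ xf i ∧ xf i ≤ Cu)
    (hramp : ∀ i, b < i → i ≤ e → xf i - xf (i-1) ≤ V ∧ xf (i-1) - xf i ≤ V)
    (hstart : 2 ≤ b → b ≤ e → xf b ≤ Vb)
    (hstop : e ≤ T - 1 → b ≤ e → xf e ≤ Vb) :
    inP T L Ldn Cl Cu V Vb (blkP b e xf).1 (blkP b e xf).2 := by
  have hVb0 : 0 < Vb := lt_trans hCl hVb1
  refine ⟨?_, ?_, ?_, ?_, ?_, ?_, ?_, ?_⟩
  · intro i h1 h2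
    simp only [blkP]
    split_ifs with h
    · exact le_trans hCl.le (hcap i h.1 h.2).1
    · exact le_rfl
  · intro i h1 h2
    simp only [blkP]
    split_ifs <;> simp
  · intro i k h2 hT hik hk
    simp only [blkP]
    by_cases hi : b ≤ i ∧ i ≤ e
    · by_cases hi1 : b ≤ i - 1 ∧ i - 1 ≤ e
      · split_ifs <;> norm_num
      · have hib : i = b := by omega
        have hk1 : b ≤ k ∧ k ≤ e := by
          rcases hup with h | h | h <;> omega
        split_ifs <;> first | (exfalso; omega) | norm_num
    · have : ¬ (b ≤ i ∧ i ≤ e) := hi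
      split_ifs <;> first | (exfalso; omega) | norm_num
  · intro i k h2 hT hik hk
    simp only [blkP]
    split_ifs <;> first | (exfalso; omega) | norm_num
  · intro i h1 h2
    simp only [blkP]
    split_ifs with h
    · simpa using (hcap i h.1 h.2).1
    · simp
  · intro i h1 h2
    simp only [blkP]
    split_ifs with h
    · simpa using (hcap i h.1 h.2).2
    · simp
  · intro i h2 hT
    simp only [blkP]
    split_ifs with hi hi1 hi2
    · have h := (hramp i (by omega) hi.2).1
      linarith
    · have hib : i = b := by omega
      have h : xf i ≤ Vb := by rw [hib]; exact hstart (by omega) (by omega)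
      linarith
    · have h := (hcap (i-1) hi2.1 hi2.2).1
      linarith
    · linarith
  · intro i h2 hT
    simp only [blkP]
    split_ifs with hi1 hi hi2
    · have h := (hramp i (by omega) hi.2).2
      linarith
    · have h : xf (i-1) ≤ Vb := by
        rw [show i - 1 = e by omega]
        exact hstop (by omega) (by omega)
      linarith
    · have h := (hcap i hi2.1 hi2.2).1
      linarith
    · linarith

lemma cat_good (T L Ldn : ℤ) (Cl Cu V Vb : ℝ)
    (hT : 1 ≤ T) (hL : 1 ≤ L) (hLdn : 1 ≤ Ldn)
    (hCl : 0 < Cl) (hCu : Cl < Cu) (hV : 0 < V)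
    (hVVb : Vb + V ≤ Cu) (hVb1 : Cl < Vb) (hVb2 : Vb < Cl + V)
    (S : Finset ℤ)
    (η : ℝ) (t : ℤ) (ht1 : 1 ≤ t) (ht2 : t ≤ T - 1)
    (hSb : ∀ s ∈ S, 0 ≤ s ∧ s ≤ L - 1 ∧ s ≤ T - 3 ∧ (s:ℝ) * V ≤ Cu - Vb ∧ s + 2 ≤ t)
    (δ : ℝ) (hδ0 : 0 < δ) (hδV : δ ≤ V) (hδC : δ < Cu - Cl)
    (wb we : ℤ) (wv : ℝ)
    (HwP : inP T L Ldn Cl Cu V Vb (blkP wb we (fun _ => wv)).1 (blkP wb we (fun _ => wv)).2)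
    (Hwface : (blkP wb we (fun _ => wv)).1 t
      = (Cu - η * V) * (blkP wb we (fun _ => wv)).2 t
        + η * V * (blkP wb we (fun _ => wv)).2 (t + 1)
        - ∑ s ∈ S, (Cu - Vb - (s : ℝ) * V)
            * ((blkP wb we (fun _ => wv)).2 (t - s) - (blkP wb we (fun _ => wv)).2 (t - s - 1)))
    (m : ℤ) :
    inP T L Ldn Cl Cu V Vb (catP T t S Cl Cu V Vb δ wb we wv m).1
        (catP T t S Cl Cu V Vb δ wb we wv m).2 ∧
      (catP T t S Cl Cu V Vb δ wb we wv m).1 t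
        = (Cu - η * V) * (catP T t S Cl Cu V Vb δ wb we wv m).2 t
          + η * V * (catP T t S Cl Cu V Vb δ wb we wv m).2 (t + 1)
          - ∑ s ∈ S, (Cu - Vb - (s : ℝ) * V)
              * ((catP T t S Cl Cu V Vb δ wb we wv m).2 (t - s)
                 - (catP T t S Cl Cu V Vb δ wb we wv m).2 (t - s - 1)) := by
  by_cases h0 : m = 0
  · have hcat : catP T t S Cl Cu V Vb δ wb we wv m = blkP 1 0 (fun _ => Cl) := by
      unfold catP; rw [if_pos h0]
    rw [hcat]
    constructor
    · exact inP_blkP T L Ldn Cl Cu V Vb hCl hV hVb1 1 0 _ (Or.inl rfl)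
        (fun i h1 h2 => absurd h2 (by omega))
        (fun i h1 h2 => absurd h2 (by omega))
        (fun h _ => absurd h (by norm_num))
        (fun _ h => absurd h (by omega))
    · have hsum : ∑ s ∈ S, (Cu - Vb - (s : ℝ) * V)
          * ((blkP 1 0 (fun _ => Cl)).2 (t - s) - (blkP 1 0 (fun _ => Cl)).2 (t - s - 1)) = 0 := by
        refine Finset.sum_eq_zero fun s hs => ?_
        have hsb := hSb s hs
        simp only [blkP]
        split_ifs <;> first | (exfalso; omega) | ring
      rw [hsum]
      simp only [blkP]
      simp only [if_neg (by omega : ¬(1 ≤ t ∧ t ≤ 0)),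
        if_neg (by omega : ¬(1 ≤ t + 1 ∧ t + 1 ≤ 0))]
      ring
  · by_cases h1 : m ≤ T
    · -- U points
      have hcat : catP T t S Cl Cu V Vb δ wb we wv m
          = blkP 1 T (fun i => if i = m ∧ ¬ m = t then Cu - δ else Cu) := by
        unfold catP; rw [if_neg h0, if_pos h1]
      rw [hcat]
      constructor
      · refine inP_blkP T L Ldn Cl Cu V Vb hCl hV hVb1 1 T _ (Or.inl rfl) ?_ ?_
          (fun h _ => absurd h (by norm_num)) (fun h _ => absurd h (by omega))
        · intro i hi1 hi2
          constructor <;> split_ifs <;> linarith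
        · intro i hi1 hi2
          constructor <;> split_ifs <;> linarith
      · have hsum : ∑ s ∈ S, (Cu - Vb - (s : ℝ) * V)
            * ((blkP 1 T (fun i => if i = m ∧ ¬ m = t then Cu - δ else Cu)).2 (t - s)
               - (blkP 1 T (fun i => if i = m ∧ ¬ m = t then Cu - δ else Cu)).2 (t - s - 1)) = 0 := by
          refine Finset.sum_eq_zero fun s hs => ?_
          have hsb := hSb s hs
          simp only [blkP]
          split_ifs <;> first | (exfalso; omega) | ring
        rw [hsum]
        simp only [blkP]
        simp only [if_pos (by omega : 1 ≤ t ∧ t ≤ T), if_pos (by omega : 1 ≤ t + 1 ∧ t + 1 ≤ T),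
          if_neg (by omega : ¬(t = m ∧ ¬ m = t))]
        ring
    · by_cases h2 : m - T = t
      · -- the w point
        have hcat : catP T t S Cl Cu V Vb δ wb we wv m = blkP wb we (fun _ => wv) := by
          unfold catP; rw [if_neg h0, if_neg h1, if_pos h2]
        rw [hcat]
        exact ⟨HwP, Hwface⟩
      · by_cases h3 : m - T < t
        · by_cases h4 : t - (m - T) - 1 ∈ S
          · -- ramped suffix point, startup at m-T+1, s₀ = t-(m-T)-1
            have hs₀ := hSb _ h4
            have hcat : catP T t S Cl Cu V Vb δ wb we wv m
                = blkP (m - T + 1) T (fun i => Vb + ((min i t - (m - T + 1) : ℤ) : ℝ) * V) := by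
              unfold catP; rw [if_neg h0, if_neg h1, if_neg h2, if_pos h3, if_pos h4]
            rw [hcat]
            constructor
            · refine inP_blkP T L Ldn Cl Cu V Vb hCl hV hVb1 _ _ _ (Or.inr (Or.inl rfl))
                ?_ ?_ ?_ (fun h _ => absurd h (by omega))
              · intro i hi1 hi2
                have hd0 : (0:ℝ) ≤ ((min i t - (m - T + 1) : ℤ) : ℝ) := by
                  have : (0:ℤ) ≤ min i t - (m - T + 1) := by omega
                  exact_mod_cast this
                have hd1 : ((min i t - (m - T + 1) : ℤ) : ℝ) ≤ ((t - (m - T) - 1 : ℤ) : ℝ) := by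
                  have : min i t - (m - T + 1) ≤ t - (m - T) - 1 := by omega
                  exact_mod_cast this
                have hs₀V : ((t - (m - T) - 1 : ℤ) : ℝ) * V ≤ Cu - Vb := hs₀.2.2.2.1
                constructor
                · nlinarith
                · nlinarith
              · intro i hi1 hi2
                have h : min i t = min (i-1) t ∨ min i t = min (i-1) t + 1 := by omega
                rcases h with h | h <;> rw [h] <;> push_cast <;>
                  constructor <;> linarith
              · intro hb he
                rw [min_eq_left (by omega : m - T + 1 ≤ t), sub_self]
                norm_num
            · have hsum : ∑ s ∈ S, (Cu - Vb - (s : ℝ) * V)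
                  * ((blkP (m - T + 1) T (fun i => Vb + ((min i t - (m - T + 1) : ℤ) : ℝ) * V)).2 (t - s)
                     - (blkP (m - T + 1) T (fun i => Vb + ((min i t - (m - T + 1) : ℤ) : ℝ) * V)).2 (t - s - 1))
                  = (Cu - Vb - ((t - (m - T) - 1 : ℤ) : ℝ) * V) := by
                rw [Finset.sum_eq_single_of_mem _ h4]
                · simp only [blkP]
                  rw [if_pos (by omega : m - T + 1 ≤ t - (t - (m - T) - 1) ∧ t - (t - (m - T) - 1) ≤ T),
                    if_neg (by omega : ¬(m - T + 1 ≤ t - (t - (m - T) - 1) - 1 ∧ t - (t - (m - T) - 1) - 1 ≤ T))]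
                  push_cast
                  ring
                · intro s hs hne
                  have hsb := hSb s hs
                  simp only [blkP]
                  split_ifs <;> first | (exfalso; omega) | ring
              rw [hsum]
              simp only [blkP]
              simp only [if_pos (by omega : m - T + 1 ≤ t ∧ t ≤ T),
                if_pos (by omega : m - T + 1 ≤ t + 1 ∧ t + 1 ≤ T), min_self]
              push_cast
              ring
          · -- block [1, m-T]
            have hcat : catP T t S Cl Cu V Vb δ wb we wv m
                = blkP 1 (m - T) (fun _ => Cl) := by
              unfold catP; rw [if_neg h0, if_neg h1, if_neg h2, if_pos h3, if_neg h4]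
            rw [hcat]
            constructor
            · exact inP_blkP T L Ldn Cl Cu V Vb hCl hV hVb1 _ _ _ (Or.inl rfl)
                (fun i _ _ => ⟨le_rfl, hCu.le⟩)
                (fun i _ _ => ⟨by linarith, by linarith⟩)
                (fun h _ => absurd h (by norm_num))
                (fun _ _ => hVb1.le)
            · have hsum : ∑ s ∈ S, (Cu - Vb - (s : ℝ) * V)
                  * ((blkP 1 (m - T) (fun _ => Cl)).2 (t - s)
                     - (blkP 1 (m - T) (fun _ => Cl)).2 (t - s - 1)) = 0 := by
                refine Finset.sum_eq_zero fun s hs => ?_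
                have hsb := hSb s hs
                have hne : s ≠ t - (m - T) - 1 := fun h => h4 (h ▸ hs)
                simp only [blkP]
                split_ifs <;> first | (exfalso; omega) | ring
              rw [hsum]
              simp only [blkP]
              simp only [if_neg (by omega : ¬(1 ≤ t ∧ t ≤ m - T)),
                if_neg (by omega : ¬(1 ≤ t + 1 ∧ t + 1 ≤ m - T))]
              ring
        · -- suffix [m-T+1, T], m-T > t
          have hcat : catP T t S Cl Cu V Vb δ wb we wv m
              = blkP (m - T + 1) T (fun _ => Cl) := by
            unfold catP; rw [if_neg h0, if_neg h1, if_neg h2, if_neg h3]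
          rw [hcat]
          constructor
          · exact inP_blkP T L Ldn Cl Cu V Vb hCl hV hVb1 _ _ _ (Or.inr (Or.inl rfl))
              (fun i _ _ => ⟨le_rfl, hCu.le⟩)
              (fun i _ _ => ⟨by linarith, by linarith⟩)
              (fun _ _ => hVb1.le)
              (fun h _ => absurd h (by omega))
          · have hsum : ∑ s ∈ S, (Cu - Vb - (s : ℝ) * V)
                * ((blkP (m - T + 1) T (fun _ => Cl)).2 (t - s)
                   - (blkP (m - T + 1) T (fun _ => Cl)).2 (t - s - 1)) = 0 := by
              refine Finset.sum_eq_zero fun s hs => ?_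
              have hsb := hSb s hs
              simp only [blkP]
              split_ifs <;> first | (exfalso; omega) | ring
            rw [hsum]
            simp only [blkP]
            simp only [if_neg (by omega : ¬(m - T + 1 ≤ t ∧ t ≤ T)),
              if_neg (by omega : ¬(m - T + 1 ≤ t + 1 ∧ t + 1 ≤ T))]
            ring

section diffs
variable (T t : ℤ) (S : Finset ℤ) (Cl Cu V Vb δ : ℝ) (wb we : ℤ) (wv : ℝ)

lemma cat_diff_zero (ht1 : 1 ≤ t) (ht2 : t ≤ T - 1)
    (j m : ℤ) (hj1 : 1 ≤ j) (hj2 : j ≤ T - 1) (hm : m ≠ T + j) (hmt : m ≠ T + t) :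
    (catP T t S Cl Cu V Vb δ wb we wv m).2 j
      - (catP T t S Cl Cu V Vb δ wb we wv m).2 (j+1) = 0 := by
  rw [catP_snd]
  exact diff_zero _ _ _ (by unfold catE; split_ifs <;> omega)
    (by unfold catB; split_ifs <;> omega)

lemma cat_diff_pm (ht1 : 1 ≤ t) (ht2 : t ≤ T - 1)
    (hwbe : wb ≤ we) (hwe : we = t ∨ (wb = t + 1 ∧ we = T))
    (j m : ℤ) (hj1 : 1 ≤ j) (hj2 : j ≤ T - 1) (hm : m = T + j) :
    (catP T t S Cl Cu V Vb δ wb we wv m).2 j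
        - (catP T t S Cl Cu V Vb δ wb we wv m).2 (j+1) = 1 ∨
      (catP T t S Cl Cu V Vb δ wb we wv m).2 j
        - (catP T t S Cl Cu V Vb δ wb we wv m).2 (j+1) = -1 := by
  rw [catP_snd]
  simp only [ind_diff]
  rcases hwe with hwe | hwe <;>
  · unfold catB catE
    split_ifs <;> first | (exfalso; omega) | norm_num

lemma cat_x0 (j m : ℤ) (hm : m = 0) (hT : 1 ≤ T) :
    (catP T t S Cl Cu V Vb δ wb we wv m).1 j
      - Cu * (catP T t S Cl Cu V Vb δ wb we wv m).2 T = 0 := by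
  unfold catP
  rw [if_pos hm]
  simp only [blkP]
  simp only [if_neg (by omega : ¬(1 ≤ T ∧ T ≤ 0))]
  split_ifs <;> first | (exfalso; omega) | ring

lemma cat_xU_ne (j m : ℤ) (hm1 : 1 ≤ m) (hm2 : m ≤ T) (hj1 : 1 ≤ j) (hj2 : j ≤ T)
    (hne : ¬(j = m ∧ ¬ m = t)) :
    (catP T t S Cl Cu V Vb δ wb we wv m).1 j
      - Cu * (catP T t S Cl Cu V Vb δ wb we wv m).2 T = 0 := by
  unfold catP
  rw [if_neg (by omega : ¬ m = 0), if_pos hm2]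
  simp only [blkP]
  simp only [if_pos (by omega : 1 ≤ j ∧ j ≤ T), if_pos (by omega : 1 ≤ T ∧ T ≤ T),
    if_neg hne]
  ring

lemma cat_xU_eq (m : ℤ) (hm1 : 1 ≤ m) (hm2 : m ≤ T) (hmt : ¬ m = t) :
    (catP T t S Cl Cu V Vb δ wb we wv m).1 m
      - Cu * (catP T t S Cl Cu V Vb δ wb we wv m).2 T = -δ := by
  unfold catP
  rw [if_neg (by omega : ¬ m = 0), if_pos hm2]
  simp only [blkP]
  simp only [if_pos (by omega : 1 ≤ m ∧ m ≤ T), if_pos (by omega : 1 ≤ T ∧ T ≤ T)]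
  split_ifs with h
  · ring
  · exact absurd ⟨by trivial, hmt⟩ h

lemma cat_yT0 (m : ℤ) (hm : m = 0) (hT : 1 ≤ T) :
    (catP T t S Cl Cu V Vb δ wb we wv m).2 T = 0 := by
  unfold catP
  rw [if_pos hm]
  simp only [blkP]
  simp only [if_neg (by omega : ¬(1 ≤ T ∧ T ≤ 0))]

lemma cat_yTU (m : ℤ) (hm1 : 1 ≤ m) (hm2 : m ≤ T) :
    (catP T t S Cl Cu V Vb δ wb we wv m).2 T = 1 := by
  unfold catP
  rw [if_neg (by omega : ¬ m = 0), if_pos hm2]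
  simp only [blkP]
  simp only [if_pos (by omega : 1 ≤ T ∧ T ≤ T)]

end diffs

theorem master (T L Ldn : ℤ) (Cl Cu V Vb : ℝ)
    (hT : 1 ≤ T) (hL : 1 ≤ L) (hLdn : 1 ≤ Ldn)
    (hCl : 0 < Cl) (hCu : Cl < Cu) (hV : 0 < V)
    (hVVb : Vb + V ≤ Cu) (hVb1 : Cl < Vb) (hVb2 : Vb < Cl + V)
    (S : Finset ℤ)
    (η : ℝ) (t : ℤ) (ht1 : 1 ≤ t) (ht2 : t ≤ T - 1)
    (hSb : ∀ s ∈ S, 0 ≤ s ∧ s ≤ L - 1 ∧ s ≤ T - 3 ∧ (s:ℝ) * V ≤ Cu - Vb ∧ s + 2 ≤ t)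
    (δ : ℝ) (hδ0 : 0 < δ) (hδV : δ ≤ V) (hδC : δ < Cu - Cl)
    (wb we : ℤ) (wv : ℝ)
    (hwbe : wb ≤ we) (hwe : we = t ∨ (wb = t + 1 ∧ we = T))
    (HwP : inP T L Ldn Cl Cu V Vb (blkP wb we (fun _ => wv)).1 (blkP wb we (fun _ => wv)).2)
    (Hwface : (blkP wb we (fun _ => wv)).1 t
      = (Cu - η * V) * (blkP wb we (fun _ => wv)).2 t
        + η * V * (blkP wb we (fun _ => wv)).2 (t + 1)
        - ∑ s ∈ S, (Cu - Vb - (s : ℝ) * V)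
            * ((blkP wb we (fun _ => wv)).2 (t - s) - (blkP wb we (fun _ => wv)).2 (t - s - 1))) :
    ∃ p : Fin (2 * T.toNat) → (ℤ → ℝ) × (ℤ → ℝ),
      (∀ i, inP T L Ldn Cl Cu V Vb (p i).1 (p i).2 ∧
        (p i).1 t = (Cu - η * V) * (p i).2 t + η * V * (p i).2 (t + 1) -
          ∑ s ∈ S, (Cu - Vb - (s : ℝ) * V) * ((p i).2 (t - s) - (p i).2 (t - s - 1))) ∧
      AffineIndependent ℝ (fun i => embed T (p i)) := by
  refine ⟨fun i => catP T t S Cl Cu V Vb δ wb we wv ((i : ℕ) : ℤ), fun i => ?_, ?_⟩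
  · exact cat_good T L Ldn Cl Cu V Vb hT hL hLdn hCl hCu hV hVVb hVb1 hVb2 S η t ht1 ht2
      hSb δ hδ0 hδV hδC wb we wv HwP Hwface _
  · rw [affineIndependent_iff]
    intro sF w hw0 hwsum
    have key : ∀ w' : Fin (2 * T.toNat) → ℝ,
        (∑ i, w' i = 0) →
        (∑ i, w' i • embed T (catP T t S Cl Cu V Vb δ wb we wv ((i : ℕ) : ℤ)) = 0) →
        ∀ i, w' i = 0 := by
      intro w' hw'0 hw'sum
      have hval : ∀ (a b : Fin (2 * T.toNat)), ((a:ℕ):ℤ) = ((b:ℕ):ℤ) → a = b := by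
        intro a b h
        exact Fin.ext (by exact_mod_cast h)
      have Ey : ∀ j : ℤ, 1 ≤ j → j ≤ T →
          ∑ i : Fin (2 * T.toNat),
            w' i * (catP T t S Cl Cu V Vb δ wb we wv ((i : ℕ) : ℤ)).2 j = 0 := by
        intro j hj1 hj2
        have hjn : (j - 1).toNat < T.toNat := by omega
        have h := congrArg (fun v => v.2 ⟨(j-1).toNat, hjn⟩) hw'sum
        simp only [Prod.snd_sum, Prod.smul_snd, Finset.sum_apply, Pi.smul_apply,
          smul_eq_mul, embed, Prod.snd_zero, Pi.zero_apply] at h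
        rw [show (((j-1).toNat : ℕ) : ℤ) + 1 = j by omega] at h
        exact h
      have Ex : ∀ j : ℤ, 1 ≤ j → j ≤ T →
          ∑ i : Fin (2 * T.toNat),
            w' i * (catP T t S Cl Cu V Vb δ wb we wv ((i : ℕ) : ℤ)).1 j = 0 := by
        intro j hj1 hj2
        have hjn : (j - 1).toNat < T.toNat := by omega
        have h := congrArg (fun v => v.1 ⟨(j-1).toNat, hjn⟩) hw'sum
        simp only [Prod.fst_sum, Prod.smul_fst, Finset.sum_apply, Pi.smul_apply,
          smul_eq_mul, embed, Prod.fst_zero, Pi.zero_apply] at h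
        rw [show (((j-1).toNat : ℕ) : ℤ) + 1 = j by omega] at h
        exact h
      have ED : ∀ j : ℤ, 1 ≤ j → j ≤ T - 1 →
          ∑ i : Fin (2 * T.toNat),
            w' i * ((catP T t S Cl Cu V Vb δ wb we wv ((i : ℕ) : ℤ)).2 j
              - (catP T t S Cl Cu V Vb δ wb we wv ((i : ℕ) : ℤ)).2 (j+1)) = 0 := by
        intro j hj1 hj2
        have h1 := Ey j hj1 (by omega)
        have h2 := Ey (j+1) (by omega) (by omega)
        have h3 : ∑ i : Fin (2 * T.toNat),
            w' i * ((catP T t S Cl Cu V Vb δ wb we wv ((i : ℕ) : ℤ)).2 j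
              - (catP T t S Cl Cu V Vb δ wb we wv ((i : ℕ) : ℤ)).2 (j+1))
          = ∑ i : Fin (2 * T.toNat),
            (w' i * (catP T t S Cl Cu V Vb δ wb we wv ((i : ℕ) : ℤ)).2 j
              - w' i * (catP T t S Cl Cu V Vb δ wb we wv ((i : ℕ) : ℤ)).2 (j+1)) :=
          Finset.sum_congr rfl fun i _ => by ring
        rw [h3, Finset.sum_sub_distrib, h1, h2]
        ring
      -- Step 1: the special `w`-point weight vanishes
      have hYt : ∀ i : Fin (2 * T.toNat), ((i:ℕ):ℤ) = T + t → w' i = 0 := by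
        intro i hi
        have h0 : ∀ b : Fin (2 * T.toNat), b ≠ i →
            w' b * ((catP T t S Cl Cu V Vb δ wb we wv ((b : ℕ) : ℤ)).2 t
              - (catP T t S Cl Cu V Vb δ wb we wv ((b : ℕ) : ℤ)).2 (t+1)) = 0 := by
          intro b hb
          have hbne : ((b:ℕ):ℤ) ≠ T + t := by
            intro hh
            exact hb (hval b i (by omega))
          exact mul_eq_zero_of_right _
            (cat_diff_zero T t S Cl Cu V Vb δ wb we wv ht1 ht2 t _ ht1 ht2 hbne hbne)
        have h := sum_single_zero _ i (ED t ht1 ht2) h0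
        rcases cat_diff_pm T t S Cl Cu V Vb δ wb we wv ht1 ht2 hwbe hwe t ((i:ℕ):ℤ) ht1 ht2
            hi with hc | hc <;> rw [hc] at h <;> simpa using h
      -- Step 2: all remaining Y-block weights vanish
      have hYo : ∀ i : Fin (2 * T.toNat), T + 1 ≤ ((i:ℕ):ℤ) → ((i:ℕ):ℤ) ≠ T + t →
          w' i = 0 := by
        intro i hi1 hi2
        have hiLT := i.isLt
        have hj1 : 1 ≤ ((i:ℕ):ℤ) - T := by omega
        have hj2 : ((i:ℕ):ℤ) - T ≤ T - 1 := by omega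
        have h0 : ∀ b : Fin (2 * T.toNat), b ≠ i →
            w' b * ((catP T t S Cl Cu V Vb δ wb we wv ((b : ℕ) : ℤ)).2 (((i:ℕ):ℤ) - T)
              - (catP T t S Cl Cu V Vb δ wb we wv ((b : ℕ) : ℤ)).2 ((((i:ℕ):ℤ) - T)+1)) = 0 := by
          intro b hb
          by_cases hbt : ((b:ℕ):ℤ) = T + t
          · exact mul_eq_zero_of_left (hYt b hbt) _
          · have hbne : ((b:ℕ):ℤ) ≠ T + (((i:ℕ):ℤ) - T) := by
              intro hh
              exact hb (hval b i (by omega))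
            exact mul_eq_zero_of_right _
              (cat_diff_zero T t S Cl Cu V Vb δ wb we wv ht1 ht2 _ _ hj1 hj2 hbne hbt)
        have h := sum_single_zero _ i (ED (((i:ℕ):ℤ) - T) hj1 hj2) h0
        rcases cat_diff_pm T t S Cl Cu V Vb δ wb we wv ht1 ht2 hwbe hwe
            (((i:ℕ):ℤ) - T) ((i:ℕ):ℤ) hj1 hj2 (by omega) with hc | hc <;>
          rw [hc] at h <;> simpa using h
      -- Step 3: perturbed U-point weights vanish
      have hXU : ∀ i : Fin (2 * T.toNat), 1 ≤ ((i:ℕ):ℤ) → ((i:ℕ):ℤ) ≤ T →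
          ((i:ℕ):ℤ) ≠ t → w' i = 0 := by
        intro i hi1 hi2 hit
        have hE : ∑ b : Fin (2 * T.toNat),
            w' b * ((catP T t S Cl Cu V Vb δ wb we wv ((b : ℕ) : ℤ)).1 ((i:ℕ):ℤ)
              - Cu * (catP T t S Cl Cu V Vb δ wb we wv ((b : ℕ) : ℤ)).2 T) = 0 := by
          have h1 := Ex ((i:ℕ):ℤ) hi1 hi2
          have h2 := Ey T (by omega) le_rfl
          have h3 : ∑ b : Fin (2 * T.toNat),
              w' b * ((catP T t S Cl Cu V Vb δ wb we wv ((b : ℕ) : ℤ)).1 ((i:ℕ):ℤ)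
                - Cu * (catP T t S Cl Cu V Vb δ wb we wv ((b : ℕ) : ℤ)).2 T)
            = ∑ b : Fin (2 * T.toNat),
              (w' b * (catP T t S Cl Cu V Vb δ wb we wv ((b : ℕ) : ℤ)).1 ((i:ℕ):ℤ)
                - Cu * (w' b * (catP T t S Cl Cu V Vb δ wb we wv ((b : ℕ) : ℤ)).2 T)) :=
            Finset.sum_congr rfl fun b _ => by ring
          rw [h3, Finset.sum_sub_distrib, ← Finset.mul_sum, h1, h2]
          ring
        have h0 : ∀ b : Fin (2 * T.toNat), b ≠ i →
            w' b * ((catP T t S Cl Cu V Vb δ wb we wv ((b : ℕ) : ℤ)).1 ((i:ℕ):ℤ)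
              - Cu * (catP T t S Cl Cu V Vb δ wb we wv ((b : ℕ) : ℤ)).2 T) = 0 := by
          intro b hb
          by_cases hb0 : ((b:ℕ):ℤ) = 0
          · exact mul_eq_zero_of_right _
              (cat_x0 T t S Cl Cu V Vb δ wb we wv _ _ hb0 (by omega))
          · by_cases hbT : ((b:ℕ):ℤ) ≤ T
            · have hbne : ((i:ℕ):ℤ) ≠ ((b:ℕ):ℤ) := by
                intro hh
                exact hb (hval b i (by omega))
              exact mul_eq_zero_of_right _
                (cat_xU_ne T t S Cl Cu V Vb δ wb we wv _ _ (by omega) hbT hi1 hi2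
                  (by intro hh; exact hbne hh.1))
            · by_cases hbt : ((b:ℕ):ℤ) = T + t
              · exact mul_eq_zero_of_left (hYt b hbt) _
              · exact mul_eq_zero_of_left (hYo b (by omega) hbt) _
        have h := sum_single_zero _ i hE h0
        rw [cat_xU_eq T t S Cl Cu V Vb δ wb we wv _ hi1 hi2 hit] at h
        rcases mul_eq_zero.mp h with h | h
        · exact h
        · exfalso; linarith
      -- Step 4: unperturbed U-point weight vanishes
      have hUt : ∀ i : Fin (2 * T.toNat), ((i:ℕ):ℤ) = t → w' i = 0 := by
        intro i hi
        have h0 : ∀ b : Fin (2 * T.toNat), b ≠ i →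
            w' b * (catP T t S Cl Cu V Vb δ wb we wv ((b : ℕ) : ℤ)).2 T = 0 := by
          intro b hb
          by_cases hb0 : ((b:ℕ):ℤ) = 0
          · exact mul_eq_zero_of_right _
              (cat_yT0 T t S Cl Cu V Vb δ wb we wv _ hb0 (by omega))
          · by_cases hbT : ((b:ℕ):ℤ) ≤ T
            · have hbne : ((b:ℕ):ℤ) ≠ t := by
                intro hh
                exact hb (hval b i (by omega))
              exact mul_eq_zero_of_left (hXU b (by omega) hbT hbne) _
            · by_cases hbt : ((b:ℕ):ℤ) = T + t
              · exact mul_eq_zero_of_left (hYt b hbt) _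
              · exact mul_eq_zero_of_left (hYo b (by omega) hbt) _
        have h := sum_single_zero _ i (Ey T (by omega) le_rfl) h0
        rw [cat_yTU T t S Cl Cu V Vb δ wb we wv _ (by omega) (by omega)] at h
        simpa using h
      -- Step 5: the zero point weight vanishes
      have hz : ∀ i : Fin (2 * T.toNat), ((i:ℕ):ℤ) = 0 → w' i = 0 := by
        intro i hi
        have h0 : ∀ b : Fin (2 * T.toNat), b ≠ i → w' b = 0 := by
          intro b hb
          have hb0 : ((b:ℕ):ℤ) ≠ 0 := by
            intro hh
            exact hb (hval b i (by omega))
          have hbLT := b.isLt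
          by_cases hbT : ((b:ℕ):ℤ) ≤ T
          · by_cases hbt : ((b:ℕ):ℤ) = t
            · exact hUt b hbt
            · exact hXU b (by omega) hbT hbt
          · by_cases hbt : ((b:ℕ):ℤ) = T + t
            · exact hYt b hbt
            · exact hYo b (by omega) hbt
        exact sum_single_zero _ i hw'0 h0
      intro i
      have hiLT := i.isLt
      by_cases h0' : ((i:ℕ):ℤ) = 0
      · exact hz i h0'
      · by_cases h1' : ((i:ℕ):ℤ) ≤ T
        · by_cases h2' : ((i:ℕ):ℤ) = t
          · exact hUt i h2'
          · exact hXU i (by omega) h1' h2'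
        · by_cases h3' : ((i:ℕ):ℤ) = T + t
          · exact hYt i h3'
          · exact hYo i (by omega) h3'
    intro e he
    have h := key (fun i => if i ∈ sF then w i else 0)
      (by rw [Finset.sum_ite_mem, Finset.univ_inter]; exact hw0)
      (by
        simp only [ite_smul, zero_smul]
        rw [Finset.sum_ite_mem, Finset.univ_inter]
        exact hwsum) e
    simpa [he] using h

theorem stmt_11 (T L Ldn : ℤ) (Cl Cu V Vb : ℝ)
    (hT : 1 ≤ T) (hL : 1 ≤ L) (hLdn : 1 ≤ Ldn)
    (hCl : 0 < Cl) (hCu : Cl < Cu) (hV : 0 < V)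
    (hVVb : Vb + V ≤ Cu) (hVb1 : Cl < Vb) (hVb2 : Vb < Cl + V)
    (S : Finset ℤ)
    (hS : S ⊆ Finset.Icc 0 (min (min (L - 1) (T - 3)) ⌊(Cu - Vb) / V⌋))
    (η : ℝ) (hη0 : 0 ≤ η) (hη1 : η ≤ min ((L : ℝ) - 1) ((Cu - Vb) / V))
    (t : ℤ) (ht1 : 1 ≤ t) (ht2 : t ≤ T - 1) (htS : ∀ s ∈ S, s + 2 ≤ t)
    (hfacet : (η = 0 ∨ η = (Cu - Vb) / V) ∨ (η = (L : ℝ) - 1 ∧ L - 1 ∈ S)) :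
    ∃ p : Fin (2 * T.toNat) → (ℤ → ℝ) × (ℤ → ℝ),
      (∀ i, inP T L Ldn Cl Cu V Vb (p i).1 (p i).2 ∧
        (p i).1 t = (Cu - η * V) * (p i).2 t + η * V * (p i).2 (t + 1) -
          ∑ s ∈ S, (Cu - Vb - (s : ℝ) * V) * ((p i).2 (t - s) - (p i).2 (t - s - 1))) ∧
      AffineIndependent ℝ (fun i => embed T (p i)) := by
  have hSb : ∀ s ∈ S, 0 ≤ s ∧ s ≤ L - 1 ∧ s ≤ T - 3 ∧ (s:ℝ) * V ≤ Cu - Vb ∧ s + 2 ≤ t := by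
    intro s hs
    have h := Finset.mem_Icc.mp (hS hs)
    have hfl : s ≤ ⌊(Cu - Vb) / V⌋ := by omega
    have hr : (s:ℝ) ≤ (Cu - Vb) / V := le_trans (Int.cast_le.mpr hfl) (Int.floor_le _)
    have hrr : (s:ℝ) * V ≤ Cu - Vb := (le_div_iff₀ hV).mp hr
    exact ⟨by omega, by omega, by omega, hrr, htS s hs⟩
  have hδ0 : 0 < min V (Cu - Cl) / 2 := by
    have : 0 < min V (Cu - Cl) := lt_min hV (by linarith)
    linarith
  have hδV : min V (Cu - Cl) / 2 ≤ V := by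
    have := min_le_left V (Cu - Cl)
    linarith
  have hδC : min V (Cu - Cl) / 2 < Cu - Cl := by
    have := min_le_right V (Cu - Cl)
    linarith
  have hVbCu : Vb ≤ Cu := by linarith
  rcases hfacet with (hη | hη) | ⟨hη, hmem⟩
  · -- η = 0 : w point is the suffix [t+1, T]
    refine master T L Ldn Cl Cu V Vb hT hL hLdn hCl hCu hV hVVb hVb1 hVb2 S η t ht1 ht2
      hSb _ hδ0 hδV hδC (t+1) T Cl (by omega) (Or.inr ⟨rfl, rfl⟩) ?_ ?_
    · exact inP_blkP T L Ldn Cl Cu V Vb hCl hV hVb1 _ _ _ (Or.inr (Or.inl rfl))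
        (fun i _ _ => ⟨le_rfl, hCu.le⟩)
        (fun i _ _ => ⟨by linarith, by linarith⟩)
        (fun _ _ => hVb1.le)
        (fun h _ => absurd h (by omega))
    · have hsum : ∑ s ∈ S, (Cu - Vb - (s : ℝ) * V)
          * ((blkP (t+1) T (fun _ => Cl)).2 (t - s) - (blkP (t+1) T (fun _ => Cl)).2 (t - s - 1)) = 0 := by
        refine Finset.sum_eq_zero fun s hs => ?_
        have hsb := hSb s hs
        simp only [blkP]
        split_ifs <;> first | (exfalso; omega) | ring
      rw [hsum]
      simp only [blkP]
      simp only [if_neg (by omega : ¬(t + 1 ≤ t ∧ t ≤ T))]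
      rw [hη]
      ring
  · -- η = (Cu - Vb)/V : w point is the block [1, t] at level Vb
    refine master T L Ldn Cl Cu V Vb hT hL hLdn hCl hCu hV hVVb hVb1 hVb2 S η t ht1 ht2
      hSb _ hδ0 hδV hδC 1 t Vb ht1 (Or.inl rfl) ?_ ?_
    · exact inP_blkP T L Ldn Cl Cu V Vb hCl hV hVb1 _ _ _ (Or.inl rfl)
        (fun i _ _ => ⟨hVb1.le, hVbCu⟩)
        (fun i _ _ => ⟨by linarith, by linarith⟩)
        (fun h _ => absurd h (by norm_num))
        (fun _ _ => le_rfl)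
    · have hsum : ∑ s ∈ S, (Cu - Vb - (s : ℝ) * V)
          * ((blkP 1 t (fun _ => Vb)).2 (t - s) - (blkP 1 t (fun _ => Vb)).2 (t - s - 1)) = 0 := by
        refine Finset.sum_eq_zero fun s hs => ?_
        have hsb := hSb s hs
        simp only [blkP]
        split_ifs <;> first | (exfalso; omega) | ring
      rw [hsum]
      simp only [blkP]
      simp only [if_pos (by omega : 1 ≤ t ∧ t ≤ t), if_neg (by omega : ¬(1 ≤ t + 1 ∧ t + 1 ≤ t))]
      rw [hη]
      field_simp
      ring
  · -- η = L - 1, L - 1 ∈ S : w point is the block [t-L+1, t] at level Vb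
    have hmem' := hSb _ hmem
    refine master T L Ldn Cl Cu V Vb hT hL hLdn hCl hCu hV hVVb hVb1 hVb2 S η t ht1 ht2
      hSb _ hδ0 hδV hδC (t - L + 1) t Vb (by omega) (Or.inl rfl) ?_ ?_
    · exact inP_blkP T L Ldn Cl Cu V Vb hCl hV hVb1 _ _ _ (Or.inr (Or.inr (by omega)))
        (fun i _ _ => ⟨hVb1.le, hVbCu⟩)
        (fun i _ _ => ⟨by linarith, by linarith⟩)
        (fun _ _ => le_rfl)
        (fun _ _ => le_rfl)
    · have hsum : ∑ s ∈ S, (Cu - Vb - (s : ℝ) * V)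
          * ((blkP (t - L + 1) t (fun _ => Vb)).2 (t - s)
             - (blkP (t - L + 1) t (fun _ => Vb)).2 (t - s - 1))
          = Cu - Vb - ((L - 1 : ℤ) : ℝ) * V := by
        rw [Finset.sum_eq_single_of_mem _ hmem]
        · simp only [blkP]
          simp only [if_pos (by omega : t - L + 1 ≤ t - (L - 1) ∧ t - (L - 1) ≤ t),
            if_neg (by omega : ¬(t - L + 1 ≤ t - (L - 1) - 1 ∧ t - (L - 1) - 1 ≤ t))]
          ring
        · intro s hs hne
          have hsb := hSb s hs
          simp only [blkP]
          split_ifs <;> first | (exfalso; omega) | ring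
      rw [hsum]
      simp only [blkP]
      simp only [if_pos (by omega : t - L + 1 ≤ t ∧ t ≤ t),
        if_neg (by omega : ¬(t - L + 1 ≤ t + 1 ∧ t + 1 ≤ t))]
      rw [hη]
      push_cast
      ring
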